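/- arXiv:0911.4183 — 3 statements merged into one kernel-verified Lean document; each statement's English description precedes it below -/
import Mathlib

section
/- Let C be an abelian category, L a localizing (Serre, hereditary torsion) subcategory of the module category Mod(G) over a small preadditive category G, and F : Mod(G) → A an additive functor into a cocomplete abelian category such that F annihilates all objects of L and preserves exactness of short exact sequences whose third term lies in L. Then for every object A of A, the right adjoint value F_*(A) = A ↦ (G ↦ Hom_A(F(G), A)) is an L-closed module, i.e. Hom_G(L, F_*A) = 0 and Ext^1_G(L, F_*A) = 0 for all L ∈ L. -/
open CategoryTheory CategoryTheory.Limits Opposite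

universe w' w v' u' v u

namespace Paper

abbrev ModC (G : Type u) [SmallCategory G] [Preadditive G] := Gᵒᵖ ⥤ AddCommGrpCat.{u}

variable {G : Type u} [SmallCategory G] [Preadditive G]

def res {U : Type u} [SmallCategory U] [Preadditive U] (S : U ⥤ G) : ModC G ⥤ ModC U :=
  (Functor.whiskeringLeft Uᵒᵖ Gᵒᵖ AddCommGrpCat.{u}).obj S.op

def resT {C : Type u'} [Category.{u} C] [Preadditive C] (T : G ⥤ C) : C ⥤ ModC G :=
  preadditiveYoneda ⋙ (Functor.whiskeringLeft Gᵒᵖ Cᵒᵖ AddCommGrpCat.{u}).obj T.op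

structure IsLocalizing (L : ModC G → Prop) : Prop where
  zero : ∀ X : ModC G, IsZero X → L X
  closed_sub : ∀ ⦃X Y : ModC G⦄ (f : X ⟶ Y), Mono f → L Y → L X
  closed_quot : ∀ ⦃X Y : ModC G⦄ (f : X ⟶ Y), Epi f → L X → L Y
  closed_ext : ∀ ⦃X Y : ModC G⦄ (f : X ⟶ Y), Mono f → L X → L (cokernel f) → L Y
  closed_coprod : ∀ {ι : Type u} (X : ι → ModC G), (∀ i, L (X i)) → L (∐ X)

def LClosed (L : ModC G → Prop) (X : ModC G) : Prop :=
  ∀ ⦃M N : ModC G⦄ (f : M ⟶ N), L (kernel f) → L (cokernel f) →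
    Function.Bijective (fun g : N ⟶ X => f ≫ g)

def AnnPres (L : ModC G → Prop) {A : Type u'} [Category.{v'} A] (Fe : ModC G ⥤ A) : Prop :=
  (∀ X : ModC G, L X → IsZero (Fe.obj X)) ∧
  ∀ ⦃M N : ModC G⦄ (f : M ⟶ N), Mono f → L (cokernel f) → IsIso (Fe.map f)

def IsExtensionOf {A : Type u'} [Category.{v'} A] (F : G ⥤ A) (Fe : ModC G ⥤ A) : Prop :=
  Nonempty (PreservesColimitsOfSize.{u, u} Fe) ∧ Nonempty (preadditiveYoneda ⋙ Fe ≅ F)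

def GenClosed {A : Type u'} [Category.{v'} A] (L : ModC G → Prop) (F : G ⥤ A) : Prop :=
  ∃ Fe : ModC G ⥤ A, IsExtensionOf F Fe ∧ AnnPres L Fe

def CondEpi {U : Type u} [SmallCategory U] [Preadditive U] (S : U ⥤ G)
    (L : ModC G → Prop) : Prop :=
  ∀ (A : Type u') [Category.{v'} A] [Abelian A] [HasColimitsOfSize.{v', v'} A]
    (F F' : G ⥤ A), F.Additive → F'.Additive → GenClosed L F → S ⋙ F = S ⋙ F' → F = F'

def RingsEpi {U : Type u} [SmallCategory U] [Preadditive U] (S : U ⥤ G) : Prop :=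
  ∀ (G' : Type u) [SmallCategory G'] [Preadditive G'] (F F' : G ⥤ G'),
    F.Additive → F'.Additive → S ⋙ F = S ⋙ F' → F = F'

def Generates {U : Type u} [SmallCategory U] {C : Type u'} [Category.{v'} C] (T : U ⥤ C) : Prop :=
  ∀ ⦃X Y : C⦄ (f g : X ⟶ Y), (∀ (u : U) (h : T.obj u ⟶ X), h ≫ f = h ≫ g) → f = g


theorem stmt0 {G : Type u} [SmallCategory G] [Preadditive G]
    (L : ModC G → Prop) (hL : IsLocalizing L)
    {A : Type u'} [Category.{v'} A] [Abelian A] [HasColimitsOfSize.{v', v'} A]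
    (Fe : ModC G ⥤ A) (hadd : Fe.Additive)
    (hcolim : PreservesColimitsOfSize.{u, u} Fe)
    (hAnn : AnnPres L Fe)
    (Fr : A ⥤ ModC G) (adj : Fe ⊣ Fr) :
    ∀ a : A, LClosed L (Fr.obj a) := by
  intro a M N f hker hcoker
  haveI := hcolim
  haveI : PreservesColimitsOfSize.{0, 0} Fe := preservesColimitsOfSize_shrink.{0, u, 0, u} Fe
  obtain ⟨hZero, hMono⟩ := hAnn
  -- The mono part of the coimage factorization has cokernel in L
  have hLcm : L (cokernel (Abelian.factorThruCoimage f)) := by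
    refine hL.closed_sub
      (((cokernelEpiComp (Abelian.coimage.π f) (Abelian.factorThruCoimage f)).symm ≪≫
        cokernelIsoOfEq (Abelian.coimage.fac f)).hom) inferInstance hcoker
  have hm : IsIso (Fe.map (Abelian.factorThruCoimage f)) :=
    hMono (Abelian.factorThruCoimage f) inferInstance hLcm
  -- Fe.map of the coimage projection is iso
  have hπ : IsIso (Fe.map (Abelian.coimage.π f)) := by
    have hk0 : Fe.map (kernel.ι f) = 0 := (hZero _ hker).eq_of_src _ _
    have hπ0 : IsIso (cokernel.π (Fe.map (kernel.ι f))) := by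
      refine ⟨cokernel.desc _ (𝟙 _) (by rw [hk0]; simp), by simp, ?_⟩
      rw [← cancel_epi (cokernel.π (Fe.map (kernel.ι f)))]
      simp
    have := π_comp_cokernelComparison (kernel.ι f) Fe
    have : Fe.map (cokernel.π (kernel.ι f)) =
        cokernel.π (Fe.map (kernel.ι f)) ≫ cokernelComparison (kernel.ι f) Fe :=
      this.symm
    show IsIso (Fe.map (cokernel.π (kernel.ι f)))
    rw [this]
    infer_instance
  have hiso : IsIso (Fe.map f) := by
    rw [← Abelian.coimage.fac f, Fe.map_comp]
    infer_instance
  -- Transport bijectivity along the adjunction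
  let e1 : (N ⟶ Fr.obj a) ≃ (Fe.obj N ⟶ a) := (adj.homEquiv N a).symm
  let e2 : (Fe.obj N ⟶ a) ≃ (Fe.obj M ⟶ a) :=
    { toFun := fun u => Fe.map f ≫ u
      invFun := fun u => inv (Fe.map f) ≫ u
      left_inv := fun u => by simp
      right_inv := fun u => by simp }
  let e3 : (Fe.obj M ⟶ a) ≃ (M ⟶ Fr.obj a) := adj.homEquiv M a
  have heq : (fun g : N ⟶ Fr.obj a => f ≫ g) = ((e1.trans e2).trans e3) := by
    funext g
    show f ≫ g = (adj.homEquiv M a) (Fe.map f ≫ (adj.homEquiv N a).symm g)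
    rw [Adjunction.homEquiv_naturality_left, Equiv.apply_symm_apply]
  rw [heq]
  exact ((e1.trans e2).trans e3).bijective

end Paper
end

section
/- Let F : G → A be an additive functor from a small preadditive category G to a cocomplete abelian category A, and L a localizing subcategory of Mod(G) with quotient functor Q and right adjoint R. If F is generalized L-closed (so that F^* ≅ F^⋆ ∘ Q and F_* ≅ R ∘ F_⋆), then F^⋆ is left adjoint to F_⋆. -/
open CategoryTheory CategoryTheory.Limits Opposite

universe w' w v' u' v u

namespace Paper

variable {G : Type u} [SmallCategory G] [Preadditive G]

section
variable {Cm : Type u} [Category.{v} Cm] {C : Type w} [Category.{w'} C]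
  {A : Type u'} [Category.{v'} A]
  (Q : Cm ⥤ C) (R : C ⥤ Cm) (adjQR : Q ⊣ R) [R.Full] [R.Faithful]
  (Fe : Cm ⥤ A) (Fr : A ⥤ Cm) (adjF : Fe ⊣ Fr)
  (Fs : C ⥤ A) (e1 : Fe ≅ Q ⋙ Fs) (Fk : A ⥤ C) (e2 : Fr ≅ Fk ⋙ R)

noncomputable def descend : Fs ⊣ Fk := by
  have adj3 : Q ⋙ Fs ⊣ Fk ⋙ R := (adjF.ofNatIsoLeft e1).ofNatIsoRight e2
  have ff : R.FullyFaithful := .ofFullyFaithful R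
  haveI : IsIso adjQR.counit := adjQR.counit_isIso_of_R_fully_faithful
  exact Adjunction.mkOfHomEquiv
    { homEquiv := fun X a =>
        ((Iso.homCongr ((Fs.mapIso (asIso (adjQR.counit.app X))).symm) (Iso.refl a)).trans
          (adj3.homEquiv (R.obj X) a)).trans (ff.homEquiv).symm
      homEquiv_naturality_left_symm := by
        intro X' X a f g
        simp only [Equiv.symm_trans_apply, Equiv.symm_symm, Iso.homCongr_symm,
          Iso.homCongr, Equiv.coe_fn_mk, Equiv.coe_fn_symm_mk,
          Iso.symm_symm_eq, Iso.refl_symm, Functor.FullyFaithful.homEquiv_apply,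
          Iso.symm_hom, Iso.refl_inv, Functor.mapIso_inv, asIso_inv, Category.comp_id,
          Functor.comp_obj]
        rw [R.map_comp]
        erw [Adjunction.homEquiv_naturality_left_symm]
        simp only [Functor.comp_map, ← Category.assoc]
        congr 1
        rw [← Fs.map_comp, ← Fs.map_comp]
        have h := adjQR.counit.naturality f
        simp only [Functor.comp_map, Functor.id_map] at h
        congr 1
        rw [IsIso.inv_comp_eq, ← Category.assoc, ← h, Category.assoc,
          IsIso.hom_inv_id, Category.comp_id]
      homEquiv_naturality_right := by
        intro X a a' f g
        apply ff.map_injective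
        simp only [Equiv.trans_apply, Iso.homCongr, Equiv.coe_fn_mk,
          Equiv.coe_fn_symm_mk, Iso.symm_inv, Functor.FullyFaithful.homEquiv_symm_apply,
          Functor.mapIso_hom, asIso_hom, Iso.refl_hom, Category.comp_id, Functor.comp_obj]
        rw [R.map_comp, ff.map_preimage, ff.map_preimage, ← Category.assoc]
        erw [adj3.homEquiv_naturality_right]
        rfl }
end

theorem stmt2 {G : Type u} [SmallCategory G] [Preadditive G]
    (L : ModC G → Prop) (hL : IsLocalizing L)
    {C : Type w} [Category.{w'} C]
    (Q : ModC G ⥤ C) (R : C ⥤ ModC G) (adjQR : Q ⊣ R)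
    (hRfull : R.Full) (hRfaithful : R.Faithful) (hQexact : PreservesFiniteLimits Q)
    (hker : ∀ X : ModC G, L X ↔ IsZero (Q.obj X))
    {A : Type u'} [Category.{v'} A] [Abelian A] [HasColimitsOfSize.{v', v'} A]
    (F : G ⥤ A) (hF : F.Additive)
    (Fe : ModC G ⥤ A) (hext : IsExtensionOf F Fe) (hgen : AnnPres L Fe)
    (Fr : A ⥤ ModC G) (adjF : Fe ⊣ Fr)
    (Fs : C ⥤ A) (e1 : Fe ≅ Q ⋙ Fs)
    (Fk : A ⥤ C) (e2 : Fr ≅ Fk ⋙ R) :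
    Nonempty (Fs ⊣ Fk) := by
  haveI := hRfull
  haveI := hRfaithful
  exact ⟨descend Q R adjQR Fe Fr adjF Fs e1 Fk e2⟩

end Paper
end

section
/- Let I : G → V be a morphism of rings with several objects such that the induced adjoint pair (I^*, I_*) between Mod(G) and Mod(V) is a localization (I^* exact, I_* fully faithful). Then I^* and I_* are mutually inverse equivalences of categories if and only if every representable module G(−,G), G ∈ G, is (Ker I^*)-closed. -/
open CategoryTheory CategoryTheory.Limits Opposite

universe w' w v' u' v u

namespace Paper

variable {G : Type u} [SmallCategory G] [Preadditive G]

theorem stmt16 {G V : Type u} [SmallCategory G] [Preadditive G]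
    [SmallCategory V] [Preadditive V]
    (I : G ⥤ V) (hI : I.Additive)
    (Iind : ModC G ⥤ ModC V) (adj : Iind ⊣ res I)
    (hext : Nonempty (preadditiveYoneda ⋙ Iind ≅ I ⋙ preadditiveYoneda))
    (hexact : PreservesFiniteLimits Iind)
    (hfull : (res I).Full) (hfaithful : (res I).Faithful) :
    (Nonempty (Iind ⋙ res I ≅ 𝟭 (ModC G)) ∧ Nonempty (res I ⋙ Iind ≅ 𝟭 (ModC V))) ↔
      ∀ g : G, LClosed (fun X => IsZero (Iind.obj X)) (preadditiveYoneda.obj g) := by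
  obtain ⟨φ⟩ := hext
  haveI := hfull
  haveI := hfaithful
  haveI := hexact
  haveI : PreservesColimitsOfSize.{0, 0} Iind := adj.leftAdjoint_preservesColimits
  constructor
  · rintro ⟨⟨i1⟩, -⟩ g M N f hk hc
    have hzero : ∀ Z : ModC G, IsZero (Iind.obj Z) → IsZero Z := by
      intro Z hZ
      refine IsZero.of_iso ?_ (i1.app Z).symm
      rw [Functor.isZero_iff] at hZ ⊢
      intro X
      exact hZ _
    haveI : Mono f :=
      Abelian.mono_of_kernel_ι_eq_zero f ((hzero _ hk).eq_of_src _ _)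
    haveI : Epi f :=
      Abelian.epi_of_cokernel_π_eq_zero f ((hzero _ hc).eq_of_tgt _ _)
    haveI : IsIso f := isIso_of_mono_of_epi f
    constructor
    · intro a b hab
      exact (cancel_epi f).mp hab
    · intro h
      exact ⟨inv f ≫ h, by simp⟩
  · intro hy
    -- `Iind.map` of the unit is always an isomorphism since the counit is.
    have hIindUnit : ∀ X : ModC G, IsIso (Iind.map (adj.unit.app X)) := by
      intro X
      have h := adj.left_triangle_components X
      have h3 : adj.counit.app (Iind.obj X) ≫ Iind.map (adj.unit.app X) = 𝟙 _ := by
        rw [← cancel_mono (adj.counit.app (Iind.obj X)), Category.assoc, h]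
        simp
      exact ⟨adj.counit.app (Iind.obj X), h, h3⟩
    -- kernels and cokernels of units are annihilated by `Iind`
    have hker : ∀ X : ModC G, IsZero (Iind.obj (kernel (adj.unit.app X))) := by
      intro X
      haveI := hIindUnit X
      exact IsZero.of_iso (isZero_zero _)
        ((PreservesKernel.iso Iind _) ≪≫ kernel.ofMono (Iind.map (adj.unit.app X)))
    have hcoker : ∀ X : ModC G, IsZero (Iind.obj (cokernel (adj.unit.app X))) := by
      intro X
      haveI := hIindUnit X
      exact IsZero.of_iso (isZero_zero _)
        ((PreservesCokernel.iso Iind _) ≪≫ cokernel.ofEpi (Iind.map (adj.unit.app X)))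
    -- a morphism whose kernel and cokernel is annihilated becomes invertible
    have hmap : ∀ {M N : ModC G} (f : M ⟶ N), IsZero (Iind.obj (kernel f)) →
        IsZero (Iind.obj (cokernel f)) → IsIso (Iind.map f) := by
      intro M N f hk hc
      haveI : Mono (Iind.map f) := Abelian.mono_of_kernel_ι_eq_zero _
        ((hk.of_iso (PreservesKernel.iso Iind f).symm).eq_of_src _ _)
      haveI : Epi (Iind.map f) := Abelian.epi_of_cokernel_π_eq_zero _
        ((hc.of_iso (PreservesCokernel.iso Iind f).symm).eq_of_tgt _ _)
      exact isIso_of_mono_of_epi _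
    -- every restricted module is closed
    have hresClosed : ∀ Y : ModC V,
        LClosed (fun X => IsZero (Iind.obj X)) ((res I).obj Y) := by
      intro Y M N f hk hc
      haveI := hmap f hk hc
      constructor
      · intro a b hab
        have hab' : f ≫ a = f ≫ b := hab
        apply (adj.homEquiv N Y).symm.injective
        apply (cancel_epi (Iind.map f)).mp
        rw [← adj.homEquiv_naturality_left_symm, ← adj.homEquiv_naturality_left_symm, hab']
      · intro h
        refine ⟨adj.homEquiv N Y (inv (Iind.map f) ≫ (adj.homEquiv M Y).symm h), ?_⟩
        apply (adj.homEquiv M Y).symm.injective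
        rw [adj.homEquiv_naturality_left_symm, Equiv.symm_apply_apply,
          ← Category.assoc, IsIso.hom_inv_id, Category.id_comp]
    -- the unit is an isomorphism on representables
    have hunit_y : ∀ g : G, IsIso (adj.unit.app (preadditiveYoneda.obj g)) := by
      intro g
      obtain ⟨r, hr⟩ := (hy g (adj.unit.app (preadditiveYoneda.obj g)) (hker _) (hcoker _)).2
        (𝟙 (preadditiveYoneda.obj g))
      have hr' : adj.unit.app (preadditiveYoneda.obj g) ≫ r = 𝟙 _ := hr
      have key : adj.unit.app (preadditiveYoneda.obj g) ≫
            (r ≫ adj.unit.app (preadditiveYoneda.obj g)) =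
          adj.unit.app (preadditiveYoneda.obj g) ≫ 𝟙 ((Iind ⋙ res I).obj (preadditiveYoneda.obj g)) := by
        rw [← Category.assoc, hr', Category.id_comp, Category.comp_id]
      have hrf : r ≫ adj.unit.app (preadditiveYoneda.obj g) =
          𝟙 ((Iind ⋙ res I).obj (preadditiveYoneda.obj g)) :=
        (hresClosed (Iind.obj (preadditiveYoneda.obj g))
          (adj.unit.app (preadditiveYoneda.obj g)) (hker _) (hcoker _)).1 key
      exact ⟨r, hr', hrf⟩
    -- the natural comparison maps on representables
    let t : ∀ g : G, preadditiveYoneda.obj g ⟶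
        (res I).obj (preadditiveYoneda.obj (I.obj g)) :=
      fun g => adj.unit.app (preadditiveYoneda.obj g) ≫ (res I).map (φ.hom.app g)
    have htIso : ∀ g, IsIso (t g) := by
      intro g
      haveI := hunit_y g
      exact inferInstance
    have htBij : ∀ g g' : G, Function.Bijective ((t g).app (op g')) := by
      intro g g'
      haveI := htIso g
      haveI : IsIso ((t g).app (op g')) := inferInstance
      exact ConcreteCategory.bijective_of_isIso (C := AddCommGrpCat.{u}) ((t g).app (op g'))
    have hI1 : ∀ {g'' g' g : G} (f' : g'' ⟶ g') (f : g' ⟶ g),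
        (t g).app (op g'') (f' ≫ f) = I.map f' ≫ (t g).app (op g') f := by
      intro g'' g' g f' f
      have h := ConcreteCategory.congr_hom ((t g).naturality f'.op) f
      change (t g).app (op g'') ((preadditiveYoneda.obj g).map f'.op f) =
        ((res I).obj (preadditiveYoneda.obj (I.obj g))).map f'.op ((t g).app (op g') f) at h
      simp only [res, Functor.whiskeringLeft] at h ⊢
      simp at h
      exact h
    have hI2 : ∀ {g g₂ : G} (h : g ⟶ g₂),
        preadditiveYoneda.map h ≫ t g₂ =
          t g ≫ (res I).map (preadditiveYoneda.map (I.map h)) := by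
      intro g g₂ h
      show preadditiveYoneda.map h ≫ adj.unit.app (preadditiveYoneda.obj g₂) ≫
          (res I).map (φ.hom.app g₂) = (adj.unit.app (preadditiveYoneda.obj g) ≫
          (res I).map (φ.hom.app g)) ≫ (res I).map (preadditiveYoneda.map (I.map h))
      rw [← Category.assoc, ← adj.unit_naturality (preadditiveYoneda.map h), Category.assoc,
        ← Functor.map_comp]
      have hφ : Iind.map (preadditiveYoneda.map h) ≫ φ.hom.app g₂ =
          φ.hom.app g ≫ preadditiveYoneda.map (I.map h) := φ.hom.naturality h
      rw [hφ, Functor.map_comp, Category.assoc]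
    clear_value t
    -- elementwise versions
    have hI4 : ∀ {g g₂ : G} (h : g ⟶ g₂),
        (t g₂).app (op g) h = I.map h ≫ (t g₂).app (op g₂) (𝟙 g₂) := by
      intro g g₂ h
      have := hI1 h (𝟙 g₂)
      rwa [Category.comp_id] at this
    have hI3 : ∀ {g g₂ : G} (h : g ⟶ g₂),
        (t g₂).app (op g) h = (t g).app (op g) (𝟙 g) ≫ I.map h := by
      intro g g₂ h
      have h0 := NatTrans.congr_app (hI2 h) (op g)
      rw [NatTrans.comp_app, NatTrans.comp_app] at h0
      have h1 := ConcreteCategory.congr_hom h0 (𝟙 g)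
      change (t g₂).app (op g) ((preadditiveYoneda.map h).app (op g) (𝟙 g)) =
        ((res I).map (preadditiveYoneda.map (I.map h))).app (op g) ((t g).app (op g) (𝟙 g)) at h1
      have e1 : (preadditiveYoneda.map h).app (op g) (𝟙 g) = h := by
        show 𝟙 g ≫ h = h
        simp
      rw [e1] at h1
      exact h1
    -- `I` is fully faithful
    haveI : I.Faithful := by
      refine ⟨fun {g' g} {a b} hab => ?_⟩
      apply (htBij g g').1
      rw [hI4 a, hI4 b, hab]
    haveI : I.Full := by
      refine ⟨fun {g' g} ψ => ?_⟩
      obtain ⟨e, he⟩ := (htBij g g).2 (𝟙 (I.obj g))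
      have hu2 : (t g).app (op g) (𝟙 g) ≫ I.map e = 𝟙 (I.obj g) := by
        rw [← hI3 e, he]
      obtain ⟨f, hf⟩ := (htBij g g').2 (ψ ≫ (t g).app (op g) (𝟙 g))
      change g' ⟶ g at f
      refine ⟨f, ?_⟩
      have h1 : I.map f ≫ (t g).app (op g) (𝟙 g) = ψ ≫ (t g).app (op g) (𝟙 g) := by
        rw [← hI4, hf]
      have h2 := congrArg (fun z => z ≫ I.map e) h1
      dsimp only at h2
      calc I.map f = I.map f ≫ 𝟙 _ := (Category.comp_id _).symm
        _ = I.map f ≫ ((t g).app (op g) (𝟙 g) ≫ I.map e) := congrArg _ hu2.symm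
        _ = (I.map f ≫ (t g).app (op g) (𝟙 g)) ≫ I.map e := (Category.assoc _ _ _).symm
        _ = (ψ ≫ (t g).app (op g) (𝟙 g)) ≫ I.map e := h2
        _ = ψ ≫ ((t g).app (op g) (𝟙 g) ≫ I.map e) := Category.assoc _ _ _
        _ = ψ ≫ 𝟙 _ := congrArg _ hu2
        _ = ψ := Category.comp_id _
    -- Kan extension along the fully faithful `I.op` has invertible unit; transfer it
    have hunit : ∀ X : ModC G, IsIso (adj.unit.app X) := by
      intro X
      haveI : IsIso ((I.op.lanAdjunction AddCommGrpCat.{u}).unit.app X) := inferInstance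
      have h := Adjunction.unit_leftAdjointUniq_hom_app adj (I.op.lanAdjunction AddCommGrpCat.{u}) X
      haveI : IsIso ((Adjunction.leftAdjointUniq adj (I.op.lanAdjunction AddCommGrpCat.{u})).hom.app X) :=
        inferInstance
      haveI : IsIso ((res I).map ((Adjunction.leftAdjointUniq adj
          (I.op.lanAdjunction AddCommGrpCat.{u})).hom.app X)) := Functor.map_isIso _ _
      haveI : IsIso (adj.unit.app X ≫ (res I).map ((Adjunction.leftAdjointUniq adj
          (I.op.lanAdjunction AddCommGrpCat.{u})).hom.app X)) := by
        rw [h]; assumption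
      exact IsIso.of_isIso_comp_right _ ((res I).map ((Adjunction.leftAdjointUniq adj
          (I.op.lanAdjunction AddCommGrpCat.{u})).hom.app X))
    haveI : ∀ X : ModC G, IsIso (adj.unit.app X) := hunit
    haveI : IsIso adj.unit := NatIso.isIso_of_isIso_app _
    exact ⟨⟨(asIso adj.unit).symm⟩, ⟨asIso adj.counit⟩⟩

end Paper
end
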